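/- For every finite set D of positive integers, every D-avoiding subset of ℕ that is germ-maximal among D-avoiding sets is eventually periodic (equivalently, its generating function is a rational function). -/

import Mathlib

noncomputable def genFun (S : Set ℕ) (q : ℝ) : ℝ := ∑' n : S, q ^ (n : ℕ)

def GermLE (S S' : Set ℕ) : Prop :=
  ∃ ε > (0 : ℝ), ∀ q ∈ Set.Ioo (1 - ε) (1 : ℝ), genFun S q ≤ genFun S' q

/-- `S` is `D`-avoiding: no two elements of `S` differ by an element of `D`. -/
def DAvoiding (D : Finset ℕ) (S : Set ℕ) : Prop :=
  ∀ x ∈ S, ∀ d ∈ D, x + d ∉ S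

def EventuallyPeriodic (S : Set ℕ) : Prop :=
  ∃ N d : ℕ, 1 ≤ d ∧ ∀ n ≥ N, (n ∈ S ↔ n + d ∈ S)


noncomputable def val (w : ℕ → Bool) (q : ℝ) : ℝ := ∑' n, (if w n then q ^ n else 0)

section valsec
variable {w : ℕ → Bool} {q : ℝ}

lemma summable_val (h0 : 0 ≤ q) (h1 : q < 1) :
    Summable (fun n => if w n then q ^ n else 0) := by
  apply Summable.of_nonneg_of_le (fun n => by positivity)
    (fun n => by split <;> [exact le_refl _; positivity])
  exact summable_geometric_of_lt_one h0 h1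

lemma val_nonneg (h0 : 0 ≤ q) : 0 ≤ val w q :=
  tsum_nonneg (fun n => by positivity)

lemma val_le (h0 : 0 ≤ q) (h1 : q < 1) : val w q ≤ (1 - q)⁻¹ := by
  calc val w q ≤ ∑' n, q ^ n := by
        apply Summable.tsum_le_tsum _ (summable_val h0 h1) (summable_geometric_of_lt_one h0 h1)
        intro n; split <;> [exact le_refl _; positivity]
    _ = (1 - q)⁻¹ := tsum_geometric_of_lt_one h0 h1

lemma val_split (h0 : 0 ≤ q) (h1 : q < 1) (n : ℕ) :
    val w q = (∑ k ∈ Finset.range n, if w k then q ^ k else 0)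
      + q ^ n * val (fun j => w (n + j)) q := by
  have hs := summable_val (w := w) h0 h1
  rw [val, ← Summable.sum_add_tsum_nat_add n hs]
  congr 1
  have : ∀ i : ℕ, (if w (i + n) then q ^ (i + n) else 0)
      = q ^ n * (if w (n + i) then q ^ i else 0) := by
    intro i
    rw [Nat.add_comm n i]
    split <;> [rw [pow_add, mul_comm]; ring]
  rw [tsum_congr this, tsum_mul_left]
  rfl

lemma val_step (h0 : 0 ≤ q) (h1 : q < 1) :
    val w q = (if w 0 then (1:ℝ) else 0) + q * val (fun j => w (1 + j)) q := by
  have := val_split (w := w) h0 h1 1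
  simpa using this

end valsec

/-- eventually periodic word gives polynomial numerator -/
lemma val_rat {w : ℕ → Bool} {N c : ℕ} (hc : 1 ≤ c)
    (hper : ∀ k, N ≤ k → w (k + c) = w k) :
    ∃ P : Polynomial ℝ, ∀ q : ℝ, 0 ≤ q → q < 1 →
      (1 - q ^ c) * val w q = P.eval q := by
  classical
  set a : ℕ → ℝ := fun n => (if w n then (1:ℝ) else 0) - (if c ≤ n ∧ w (n - c) then 1 else 0)
  refine ⟨∑ n ∈ Finset.range (N + c), Polynomial.C (a n) * Polynomial.X ^ n, ?_⟩
  intro q h0 h1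
  have hs := summable_val (w := w) h0 h1
  set F : ℕ → ℝ := fun k => if w k then q ^ k else 0
  set G : ℕ → ℝ := fun k => if c ≤ k ∧ w (k - c) then q ^ k else 0
  have hGs : Summable G := by
    apply Summable.of_nonneg_of_le (fun n => by positivity)
      (fun n => by simp only [G]; split <;> [exact le_refl _; positivity])
    exact summable_geometric_of_lt_one h0 h1
  have hGF : ∀ n, G (n + c) = q ^ c * F n := by
    intro n
    simp only [G, F, Nat.le_add_left, true_and, Nat.add_sub_cancel]
    split <;> [rw [pow_add, mul_comm]; ring]
  have hqc : q ^ c * val w q = ∑' k, G k := by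
    rw [← Summable.sum_add_tsum_nat_add c hGs]
    have : ∀ i ∈ Finset.range c, G i = 0 := by
      intro i hi
      simp only [G]
      rw [if_neg]
      rintro ⟨hci, -⟩
      exact absurd hci (by simp at hi; omega)
    rw [Finset.sum_eq_zero this, zero_add, tsum_congr hGF, tsum_mul_left]
    rfl
  have key : (1 - q ^ c) * val w q = ∑' k, (F k - G k) := by
    rw [Summable.tsum_sub hs hGs, sub_mul, one_mul, hqc]
    rfl
  rw [key]
  have hzero : ∀ k ∉ Finset.range (N + c), F k - G k = 0 := by
    intro k hk
    simp only [Finset.mem_range, not_lt] at hk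
    have h1k : c ≤ k := by omega
    have h2k : N ≤ k - c := by omega
    have : w k = w (k - c) := by
      have := hper (k - c) h2k
      rw [show k - c + c = k by omega] at this
      exact this
    simp only [F, G, h1k, true_and, this, sub_self]
  rw [tsum_eq_sum hzero]
  rw [Polynomial.eval_finset_sum]
  apply Finset.sum_congr rfl
  intro n _
  simp only [Polynomial.eval_mul, Polynomial.eval_C, Polynomial.eval_pow, Polynomial.eval_X, a, F, G]
  by_cases hw : w n <;> by_cases hcw : c ≤ n ∧ w (n - c) <;> simp [hw, hcw] <;> ring

namespace GermAux

variable (D : Finset ℕ)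

def mD : ℕ := D.sup id + 1

abbrev St := Fin (mD D) → Bool

/-- playing `true` is allowed at state `s` -/
def okT (s : St D) : Prop := ∀ i : Fin (mD D), ((i : ℕ) + 1 ∈ D) → s i = false

instance : DecidablePred (okT D) := fun _ => Fintype.decidableForallFintype

def next (s : St D) (b : Bool) : St D :=
  fun i => if _ : (i : ℕ) = 0 then b else s ⟨(i : ℕ) - 1, by omega⟩

def stOf (s : St D) (w : ℕ → Bool) : ℕ → St D
  | 0 => s
  | k + 1 => next D (stOf s w k) (w k)

def Adm (s : St D) (w : ℕ → Bool) : Prop := ∀ k, w k = true → okT D (stOf D s w k)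

def s0 : St D := fun _ => false

lemma stOf_lookback (s : St D) (w : ℕ → Bool) :
    ∀ k, ∀ i : Fin (mD D), (i : ℕ) < k → stOf D s w k i = w (k - 1 - (i : ℕ)) := by
  intro k
  induction k with
  | zero => intro i hi; omega
  | succ k ih =>
    intro i hi
    show next D (stOf D s w k) (w k) i = _
    rcases Nat.eq_zero_or_pos (i : ℕ) with h0 | h0
    · simp [next, h0]
    · have h1 : ¬ ((i : ℕ) = 0) := by omega
      have : (i : ℕ) - 1 < k := by omega
      simp only [next, h1, dif_neg, not_false_iff]
      rw [ih ⟨(i : ℕ) - 1, by omega⟩ this]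
      congr 1
      simp
      omega

lemma stOf_far (w : ℕ → Bool) :
    ∀ k, ∀ i : Fin (mD D), k ≤ (i : ℕ) → stOf D (s0 D) w k i = false := by
  intro k
  induction k with
  | zero => intro i _; rfl
  | succ k ih =>
    intro i hi
    show next D (stOf D (s0 D) w k) (w k) i = false
    have h1 : ¬ ((i : ℕ) = 0) := by omega
    simp only [next, h1, dif_neg, not_false_iff]
    exact ih ⟨(i : ℕ) - 1, by omega⟩ (by simp only [Fin.val_mk]; omega)

lemma stOf_shift (s : St D) (w : ℕ → Bool) (n : ℕ) :
    ∀ k, stOf D s w (n + k) = stOf D (stOf D s w n) (fun j => w (n + j)) k := by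
  intro k
  induction k with
  | zero => rfl
  | succ k ih =>
    show stOf D s w (n + k + 1) = _
    show next D (stOf D s w (n + k)) (w (n + k)) = _
    rw [ih]; rfl

lemma adm_shift {s : St D} {w : ℕ → Bool} (h : Adm D s w) (n : ℕ) :
    Adm D (stOf D s w n) (fun j => w (n + j)) := by
  intro k hk
  rw [← stOf_shift]
  exact h (n + k) hk

/-- the word of a D-avoiding set is admissible from the all-false state -/
lemma adm_of_avoiding {S : Set ℕ} (hS : DAvoiding D S) (w : ℕ → Bool)
    (hw : ∀ n, w n = true ↔ n ∈ S) : Adm D (s0 D) w := by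
  intro k hk i hiD
  rcases lt_or_ge (i : ℕ) k with hik | hik
  · rw [stOf_lookback D _ _ k i hik]
    by_contra hfalse
    have h1 : w (k - 1 - (i : ℕ)) = true := by
      cases h : w (k - 1 - (i : ℕ)) <;> simp_all
    have h2 : (k - 1 - (i : ℕ)) ∈ S := (hw _).1 h1
    have h3 : (k - 1 - (i : ℕ)) + ((i : ℕ) + 1) = k := by omega
    exact absurd ((hw k).1 hk) (h3 ▸ hS _ h2 _ hiD)
  · exact stOf_far D w k i hik

lemma avoiding_of_adm (hD : ∀ d ∈ D, 0 < d) {w : ℕ → Bool} (h : Adm D (s0 D) w) :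
    DAvoiding D {n | w n = true} := by
  intro x hx d hd hxd
  have hd1 : 1 ≤ d := hD d hd
  have hdm : d - 1 < mD D := by
    have := Finset.le_sup (f := id) hd
    simp only [id] at this
    simp only [mD]; omega
  have h2 := h (x + d) hxd ⟨d - 1, hdm⟩ (by simpa using (by omega : d - 1 + 1 = d) ▸ hd)
  rw [stOf_lookback D _ _ (x + d) ⟨d - 1, hdm⟩ (by simp; omega)] at h2
  have : x + d - 1 - (d - 1) = x := by omega
  rw [this] at h2
  have hx' : w x = true := hx
  rw [hx'] at h2
  exact Bool.true_eq_false.mp h2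

noncomputable def W (s : St D) (q : ℝ) : ℝ := ⨆ w : {w : ℕ → Bool // Adm D s w}, val w.1 q

lemma adm_false (s : St D) : Adm D s (fun _ => false) := fun _ h => by simp at h

instance admNonempty (s : St D) : Nonempty {w : ℕ → Bool // Adm D s w} :=
  ⟨⟨fun _ => false, adm_false D s⟩⟩

section Wsec

variable {q : ℝ} (hq0 : 0 < q) (hq1 : q < 1)

include hq0 hq1

lemma W_bdd (s : St D) :
    BddAbove (Set.range fun w : {w : ℕ → Bool // Adm D s w} => val w.1 q) := by
  refine ⟨(1 - q)⁻¹, ?_⟩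
  rintro x ⟨w, rfl⟩
  exact val_le hq0.le hq1

lemma le_W {s : St D} {w : ℕ → Bool} (h : Adm D s w) : val w q ≤ W D s q :=
  le_ciSup (W_bdd D hq0 hq1 s) ⟨w, h⟩

lemma W_le (s : St D) : W D s q ≤ (1 - q)⁻¹ :=
  ciSup_le fun _ => val_le hq0.le hq1

lemma W_nonneg (s : St D) : 0 ≤ W D s q :=
  le_trans (val_nonneg hq0.le) (le_W D hq0 hq1 (adm_false D s))

end Wsec

def wcons (b : Bool) (w : ℕ → Bool) : ℕ → Bool := fun k => if k = 0 then b else w (k - 1)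

lemma stOf_wcons (s : St D) (b : Bool) (w : ℕ → Bool) :
    ∀ k, stOf D s (wcons b w) (k + 1) = stOf D (next D s b) w k := by
  intro k
  induction k with
  | zero => show next D s (wcons b w 0) = _; rfl
  | succ k ih =>
    show next D (stOf D s (wcons b w) (k + 1)) (wcons b w (k + 1)) = _
    rw [ih]
    rfl

lemma adm_wcons {s : St D} {b : Bool} {w : ℕ → Bool} (hb : b = true → okT D s)
    (hw : Adm D (next D s b) w) : Adm D s (wcons b w) := by
  intro k
  cases k with
  | zero => exact fun h => hb h
  | succ k =>
    intro h
    rw [stOf_wcons]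
    exact hw k h

lemma wcons_tail (b : Bool) (w : ℕ → Bool) : (fun j => wcons b w (1 + j)) = w := by
  funext j
  simp [wcons, Nat.add_comm 1 j]

lemma val_wcons {q : ℝ} (hq0 : 0 < q) (hq1 : q < 1) (b : Bool) (w : ℕ → Bool) :
    val (wcons b w) q = (if b then (1:ℝ) else 0) + q * val w q := by
  rw [val_step hq0.le hq1, wcons_tail]
  rfl

lemma bell_ge {q : ℝ} (hq0 : 0 < q) (hq1 : q < 1) {s : St D} {b : Bool}
    (hb : b = true → okT D s) :
    (if b then (1:ℝ) else 0) + q * W D (next D s b) q ≤ W D s q := by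
  have key : ∀ w : {w : ℕ → Bool // Adm D (next D s b) w},
      val w.1 q ≤ (W D s q - (if b then (1:ℝ) else 0)) / q := by
    rintro ⟨w, hw⟩
    rw [le_div_iff₀ hq0]
    have h1 : val (wcons b w) q ≤ W D s q := le_W D hq0 hq1 (adm_wcons D hb hw)
    rw [val_wcons hq0 hq1] at h1
    linarith [h1]
  have h2 : W D (next D s b) q ≤ (W D s q - (if b then (1:ℝ) else 0)) / q := ciSup_le key
  rw [le_div_iff₀ hq0] at h2
  linarith [h2]

lemma step_le {q : ℝ} (hq0 : 0 < q) (hq1 : q < 1) {s : St D} {w : ℕ → Bool}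
    (hw : Adm D s w) :
    val w q ≤ (if w 0 then (1:ℝ) else 0) + q * W D (next D s (w 0)) q := by
  rw [val_step hq0.le hq1]
  have htail : Adm D (next D s (w 0)) (fun j => w (1 + j)) := by
    have := adm_shift D hw 1
    exact this
  have := le_W D hq0 hq1 htail
  nlinarith [this, val_nonneg (w := fun j => w (1+j)) hq0.le]

open Classical in
noncomputable def greedy (q : ℝ) : St D → Bool := fun s =>
  if okT D s ∧ q * W D (next D s false) q ≤ 1 + q * W D (next D s true) q then true else false

lemma greedy_ok (q : ℝ) (s : St D) : greedy D q s = true → okT D s := by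
  unfold greedy
  split
  · exact fun _ => by tauto
  · simp

def pstep (π : St D → Bool) : St D → St D := fun s => next D s (π s)

def pst (π : St D → Bool) (s : St D) (k : ℕ) : St D := (pstep D π)^[k] s

def pword (π : St D → Bool) (s : St D) (k : ℕ) : Bool := π (pst D π s k)

lemma pst_succ (π : St D → Bool) (s : St D) (k : ℕ) :
    pst D π s (k + 1) = next D (pst D π s k) (pword D π s k) :=
  Function.iterate_succ_apply' (pstep D π) k s

lemma pst_add (π : St D → Bool) (s : St D) (n k : ℕ) :
    pst D π s (n + k) = pst D π (pst D π s n) k := by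
  rw [pst, pst, pst, Nat.add_comm, Function.iterate_add_apply]

lemma pword_shift (π : St D → Bool) (s : St D) (n k : ℕ) :
    pword D π s (n + k) = pword D π (pst D π s n) k := by
  rw [pword, pword, pst_add]

lemma stOf_pword (π : St D → Bool) (s : St D) :
    ∀ k, stOf D s (pword D π s) k = pst D π s k := by
  intro k
  induction k with
  | zero => rfl
  | succ k ih =>
    show next D (stOf D s (pword D π s) k) (pword D π s k) = _
    rw [ih, ← pst_succ]

lemma adm_pword {π : St D → Bool} (hπ : ∀ s, π s = true → okT D s) (s : St D) :
    Adm D s (pword D π s) := by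
  intro k hk
  rw [stOf_pword]
  exact hπ _ hk

lemma W_greedy_step {q : ℝ} (hq0 : 0 < q) (hq1 : q < 1) (s : St D) :
    W D s q = (if greedy D q s then (1:ℝ) else 0)
      + q * W D (next D s (greedy D q s)) q := by
  apply le_antisymm
  · apply ciSup_le
    intro w
    refine le_trans (step_le D hq0 hq1 w.2) ?_
    cases hw0 : (w.1 0) <;> cases hg : greedy D q s
    · exact le_refl _
    · -- w 0 = false, greedy = true: q W(false) ≤ 1 + q W(true)
      unfold greedy at hg
      split at hg
      · next hcond =>
        simp only [Bool.false_eq_true, if_false, if_true, zero_add]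
        linarith [hcond.2]
      · exact absurd hg (by simp)
    · -- w 0 = true, greedy = false
      unfold greedy at hg
      split at hg
      · exact absurd hg (by simp)
      · next hcond =>
        push_neg at hcond
        have h5 := hcond (w.2 0 hw0)
        simp only [Bool.false_eq_true, if_false, if_true, zero_add]
        linarith [h5]
    · exact le_refl _
  · exact bell_ge D hq0 hq1 (greedy_ok D q s)

lemma W_unroll {q : ℝ} (hq0 : 0 < q) (hq1 : q < 1) (s : St D) :
    ∀ k, W D s q = (∑ j ∈ Finset.range k, if pword D (greedy D q) s j then q ^ j else 0)
      + q ^ k * W D (pst D (greedy D q) s k) q := by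
  intro k
  induction k with
  | zero => simp [pst]
  | succ k ih =>
    rw [ih, Finset.sum_range_succ]
    have hstep := W_greedy_step D hq0 hq1 (pst D (greedy D q) s k)
    have hpw : greedy D q (pst D (greedy D q) s k) = pword D (greedy D q) s k := rfl
    rw [hpw, ← pst_succ] at hstep
    rw [hstep]
    cases hb : pword D (greedy D q) s k <;> simp [hb, pow_succ] <;> ring

lemma eq_of_dist_le_geo {A B C q : ℝ} (hq0 : 0 ≤ q) (hq1 : q < 1)
    (h : ∀ k : ℕ, |A - B| ≤ C * q ^ k) : A = B := by
  have hT : Filter.Tendsto (fun k : ℕ => C * q ^ k) Filter.atTop (nhds 0) := by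
    have := tendsto_pow_atTop_nhds_zero_of_lt_one hq0 hq1
    simpa using this.const_mul C
  have : |A - B| ≤ 0 := ge_of_tendsto' hT h
  have : |A - B| = 0 := le_antisymm this (abs_nonneg _)
  have := abs_eq_zero.mp this
  linarith

lemma W_eq_val_greedy {q : ℝ} (hq0 : 0 < q) (hq1 : q < 1) (s : St D) :
    W D s q = val (pword D (greedy D q) s) q := by
  apply eq_of_dist_le_geo (C := (1 - q)⁻¹) hq0.le hq1
  intro k
  have h1 := W_unroll D hq0 hq1 s k
  have h2 := val_split (w := pword D (greedy D q) s) hq0.le hq1 k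
  have h3 : (fun j => pword D (greedy D q) s (k + j)) = pword D (greedy D q) (pst D (greedy D q) s k) := by
    funext j; exact pword_shift D _ s k j
  rw [h3] at h2
  have hb1 : 0 ≤ W D (pst D (greedy D q) s k) q := W_nonneg D hq0 hq1 _
  have hb2 : W D (pst D (greedy D q) s k) q ≤ (1 - q)⁻¹ := W_le D hq0 hq1 _
  have hb3 : 0 ≤ val (pword D (greedy D q) (pst D (greedy D q) s k)) q := val_nonneg hq0.le
  have hb4 : val (pword D (greedy D q) (pst D (greedy D q) s k)) q ≤ (1 - q)⁻¹ :=
    val_le hq0.le hq1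
  have hqk : (0:ℝ) ≤ q ^ k := by positivity
  rw [h1, h2]
  have : ∀ X Y H : ℝ, |(H + q^k * X) - (H + q^k * Y)| = q^k * |X - Y| := by
    intro X Y H
    rw [show (H + q^k * X) - (H + q^k * Y) = q^k * (X - Y) by ring, abs_mul, abs_of_nonneg hqk]
  rw [this]
  rw [mul_comm ((1-q)⁻¹) (q ^ k)]
  apply mul_le_mul_of_nonneg_left _ hqk
  rw [abs_le]
  constructor <;> nlinarith

def Pol : Type := {π : St D → Bool // ∀ s, π s = true → okT D s}

noncomputable instance : Fintype (Pol D) := by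
  unfold Pol
  have : DecidablePred (fun π : St D → Bool => ∀ s, π s = true → okT D s) :=
    fun _ => Fintype.decidableForallFintype
  exact Subtype.fintype _

lemma exists_period (π : St D → Bool) (s : St D) :
    ∃ N c : ℕ, 1 ≤ c ∧ ∀ k, N ≤ k → pword D π s (k + c) = pword D π s k := by
  obtain ⟨n, n', hne, heq⟩ := Finite.exists_ne_map_eq_of_infinite (fun k : ℕ => pst D π s k)
  rcases hne.lt_or_gt with h | h
  · refine ⟨n, n' - n, by omega, ?_⟩
    intro k hk
    obtain ⟨j, rfl⟩ := Nat.exists_eq_add_of_le hk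
    have h1 : n + j + (n' - n) = n' + j := by omega
    rw [h1, pword, pword, pst_add, pst_add, heq]
  · refine ⟨n', n - n', by omega, ?_⟩
    intro k hk
    obtain ⟨j, rfl⟩ := Nat.exists_eq_add_of_le hk
    have h1 : n' + j + (n - n') = n + j := by omega
    rw [h1, pword, pword, pst_add, pst_add, heq]

lemma exists_poly (π : St D → Bool) (s : St D) :
    ∃ c : ℕ, 1 ≤ c ∧ ∃ P : Polynomial ℝ, ∀ q : ℝ, 0 ≤ q → q < 1 →
      (1 - q ^ c) * val (pword D π s) q = P.eval q := by
  obtain ⟨N, c, hc, hper⟩ := exists_period D π s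
  exact ⟨c, hc, val_rat hc hper⟩

noncomputable def cc (π : St D → Bool) (s : St D) : ℕ := (exists_poly D π s).choose

lemma cc_pos (π : St D → Bool) (s : St D) : 1 ≤ cc D π s := (exists_poly D π s).choose_spec.1

noncomputable def PP (π : St D → Bool) (s : St D) : Polynomial ℝ :=
  (exists_poly D π s).choose_spec.2.choose

lemma PP_spec (π : St D → Bool) (s : St D) : ∀ q : ℝ, 0 ≤ q → q < 1 →
    (1 - q ^ cc D π s) * val (pword D π s) q = (PP D π s).eval q :=
  (exists_poly D π s).choose_spec.2.choose_spec

noncomputable def Qd (π π' : St D → Bool) (s : St D) : Polynomial ℝ :=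
  PP D π s * (1 - Polynomial.X ^ cc D π' s) - PP D π' s * (1 - Polynomial.X ^ cc D π s)

lemma Qd_spec (π π' : St D → Bool) (s : St D) {q : ℝ} (h0 : 0 ≤ q) (h1 : q < 1) :
    (Qd D π π' s).eval q = (1 - q ^ cc D π s) * (1 - q ^ cc D π' s) *
      (val (pword D π s) q - val (pword D π' s) q) := by
  simp only [Qd, Polynomial.eval_sub, Polynomial.eval_mul, Polynomial.eval_one,
    Polynomial.eval_pow, Polynomial.eval_X]
  rw [← PP_spec D π s q h0 h1, ← PP_spec D π' s q h0 h1]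
  ring

noncomputable def allRoots : Finset ℝ :=
  (Finset.univ : Finset (Pol D × Pol D × St D)).biUnion
    (fun t => (Qd D t.1.1 t.2.1.1 t.2.2).roots.toFinset)

noncomputable def q0 : ℝ := (insert (1/2 : ℝ) ((allRoots D).filter (· < 1))).max' ⟨1/2, Finset.mem_insert_self _ _⟩

lemma q0_ge : (1/2 : ℝ) ≤ q0 D := by
  rw [q0]; exact Finset.le_max' _ _ (Finset.mem_insert_self _ _)

lemma q0_lt_one : q0 D < 1 := by
  rw [q0]; apply (Finset.max'_lt_iff _ _).mpr
  intro b hb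
  rcases Finset.mem_insert.mp hb with h | h
  · rw [h]; norm_num
  · exact (Finset.mem_filter.mp h).2

lemma root_le_q0 {r : ℝ} (h : r ∈ allRoots D) (h1 : r < 1) : r ≤ q0 D := by
  rw [q0]
  refine Finset.le_max' _ _ (Finset.mem_insert_of_mem ?_)
  exact Finset.mem_filter.mpr ⟨h, h1⟩

lemma denom_pos {c : ℕ} (hc : 1 ≤ c) {q : ℝ} (h0 : 0 ≤ q) (h1 : q < 1) :
    0 < 1 - q ^ c := by
  have : q ^ c < 1 := pow_lt_one₀ h0 h1 (by omega)
  linarith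

lemma sign_prop (π π' : Pol D) (s : St D) {q q' : ℝ}
    (hq : q ∈ Set.Ioo (q0 D) 1) (hq' : q' ∈ Set.Ioo (q0 D) 1)
    (h : val (pword D π'.1 s) q' ≤ val (pword D π.1 s) q') :
    val (pword D π'.1 s) q ≤ val (pword D π.1 s) q := by
  have hhalf := q0_ge D
  have hq0 : (0:ℝ) < q := by have := hq.1; linarith
  have hq1 : q < 1 := hq.2
  have hq'0 : (0:ℝ) < q' := by have := hq'.1; linarith
  have hq'1 : q' < 1 := hq'.2
  set Q := Qd D π.1 π'.1 s with hQdef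
  have hden : ∀ x : ℝ, 0 ≤ x → x < 1 →
      0 < (1 - x ^ cc D π.1 s) * (1 - x ^ cc D π'.1 s) := by
    intro x h0 h1
    exact mul_pos (denom_pos (cc_pos D _ _) h0 h1) (denom_pos (cc_pos D _ _) h0 h1)
  by_cases hQ0 : Q = 0
  · have := Qd_spec D π.1 π'.1 s hq0.le hq1
    rw [← hQdef, hQ0] at this
    simp only [Polynomial.eval_zero] at this
    have hd := hden q hq0.le hq1
    nlinarith [this]
  · -- q' is not a root of Q
    have hroot : ∀ z : ℝ, z ∈ Set.Ioo (q0 D) 1 → Q.eval z ≠ 0 := by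
      intro z hz hzero
      have hmem : z ∈ allRoots D := by
        apply Finset.mem_biUnion.mpr
        exact ⟨⟨π, π', s⟩, Finset.mem_univ _, by
          rw [Multiset.mem_toFinset, Polynomial.mem_roots hQ0]
          exact hzero⟩
      exact absurd (root_le_q0 D hmem hz.2) (not_le.mpr hz.1)
    have hQq' : 0 < Q.eval q' := by
      have hspec := Qd_spec D π.1 π'.1 s hq'0.le hq'1
      rw [← hQdef] at hspec
      have hd := hden q' hq'0.le hq'1
      rcases lt_or_eq_of_le (by nlinarith [hspec] : (0:ℝ) ≤ Q.eval q') with h' | h'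
      · exact h'
      · exact absurd h'.symm (hroot q' hq')
    have hQq : 0 ≤ Q.eval q := by
      by_contra hneg
      push_neg at hneg
      have hcont : ContinuousOn (fun x => Q.eval x) (Set.uIcc q q') :=
        Q.continuous_aeval.continuousOn
      rcases le_total q q' with hle | hle
      · obtain ⟨z, hz, hz0⟩ := intermediate_value_Ioo hle
          (Q.continuous_aeval.continuousOn) (Set.mem_Ioo.mpr ⟨hneg, hQq'⟩)
        exact hroot z ⟨lt_trans hq.1 hz.1, lt_trans hz.2 hq'.2⟩ hz0
      · obtain ⟨z, hz, hz0⟩ := intermediate_value_Ioo' hle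
          (Q.continuous_aeval.continuousOn) (Set.mem_Ioo.mpr ⟨hneg, hQq'⟩)
        exact hroot z ⟨lt_trans hq'.1 hz.1, lt_trans hz.2 hq.2⟩ hz0
    have hspec := Qd_spec D π.1 π'.1 s hq0.le hq1
    rw [← hQdef] at hspec
    have hd := hden q hq0.le hq1
    nlinarith [hspec]

noncomputable def q1 : ℝ := (q0 D + 1) / 2

lemma q1_mem : q1 D ∈ Set.Ioo (q0 D) 1 := by
  have := q0_lt_one D
  constructor <;> [skip; skip] <;> rw [q1] <;> linarith

noncomputable def bw : Pol D := ⟨greedy D (q1 D), greedy_ok D (q1 D)⟩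

theorem bw_opt {q : ℝ} (hq : q ∈ Set.Ioo (q0 D) 1) (s : St D) {w : ℕ → Bool}
    (hw : Adm D s w) : val w q ≤ val (pword D (bw D).1 s) q := by
  have hhalf := q0_ge D
  have hq0 : (0:ℝ) < q := by have := hq.1; linarith
  have hq1 : q < 1 := hq.2
  have hq10 : (0:ℝ) < q1 D := by have := (q1_mem D).1; linarith
  have hq11 : q1 D < 1 := (q1_mem D).2
  have step1 : val w q ≤ W D s q := le_W D hq0 hq1 hw
  have step2 : W D s q = val (pword D (greedy D q) s) q := W_eq_val_greedy D hq0 hq1 s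
  have hgq : Pol D := ⟨greedy D q, greedy_ok D q⟩
  have step3 : val (pword D (greedy D q) s) q ≤ val (pword D (bw D).1 s) q := by
    apply sign_prop D (bw D) ⟨greedy D q, greedy_ok D q⟩ s hq (q1_mem D)
    calc val (pword D (greedy D q) s) (q1 D)
        ≤ W D s (q1 D) := le_W D hq10 hq11 (adm_pword D (greedy_ok D q) s)
      _ = val (pword D (bw D).1 s) (q1 D) := W_eq_val_greedy D hq10 hq11 s
  linarith

lemma stOf_agree (s : St D) (w u : ℕ → Bool) :
    ∀ k, (∀ j, j < k → u j = w j) → stOf D s u k = stOf D s w k := by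
  intro k
  induction k with
  | zero => intro _; rfl
  | succ k ih =>
    intro h
    show next D (stOf D s u k) (u k) = next D (stOf D s w k) (w k)
    rw [ih (fun j hj => h j (by omega)), h k (by omega)]

lemma adm_splice {s : St D} {w w' : ℕ → Bool} {n : ℕ} (hw : Adm D s w)
    (hw' : Adm D (stOf D s w n) w') :
    Adm D s (fun k => if k < n then w k else w' (k - n)) := by
  set u : ℕ → Bool := fun k => if k < n then w k else w' (k - n) with hu
  intro k
  by_cases hk : k < n
  · intro ht
    have h1 : stOf D s u k = stOf D s w k :=
      stOf_agree D s w u k (fun j hj => by simp [hu, show j < n by omega])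
    rw [h1]
    apply hw k
    have : u k = w k := by simp [hu, hk]
    rwa [this] at ht
  · push_neg at hk
    obtain ⟨j, rfl⟩ := Nat.exists_eq_add_of_le hk
    intro ht
    have htail : (fun i => u (n + i)) = w' := by
      funext i
      simp only [hu]
      rw [if_neg (by omega)]
      congr 1
      omega
    have h2 : stOf D s u (n + j) = stOf D (stOf D s w n) w' j := by
      rw [stOf_shift D s u n j, htail,
        stOf_agree D s w u n (fun i hi => by simp [hu, hi])]
    rw [h2]
    apply hw' j
    have : u (n + j) = w' j := by simp only [hu]; rw [if_neg (by omega)]; congr 1; omega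
    rwa [this] at ht

end GermAux

lemma genFun_eq_val (S : Set ℕ) (w : ℕ → Bool) (hw : ∀ n, w n = true ↔ n ∈ S) (q : ℝ) :
    genFun S q = val w q := by
  rw [genFun, tsum_subtype]
  apply tsum_congr
  intro n
  by_cases h : n ∈ S
  · rw [Set.indicator_of_mem h, if_pos ((hw n).mpr h)]
  · rw [Set.indicator_of_notMem h, if_neg (fun ht => h ((hw n).mp ht))]

open GermAux in
theorem germMaximal_avoiding_eventuallyPeriodic (D : Finset ℕ)
    (hD : ∀ d ∈ D, 0 < d) (Sstar : Set ℕ) (hS : DAvoiding D Sstar)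
    (hmax : ¬ ∃ S : Set ℕ, DAvoiding D S ∧ GermLE Sstar S ∧ ¬ GermLE S Sstar) :
    EventuallyPeriodic Sstar := by
  classical
  set χ : ℕ → Bool := fun n => decide (n ∈ Sstar) with hχdef
  have hχ : ∀ n, χ n = true ↔ n ∈ Sstar := by intro n; simp [hχdef]
  have hadm : Adm D (s0 D) χ := adm_of_avoiding D hS χ hχ
  set π : St D → Bool := (bw D).1 with hπdef
  have hπok : ∀ s, π s = true → okT D s := (bw D).2
  set st : ℕ → St D := fun n => stOf D (s0 D) χ n with hstdef
  have hstsucc : ∀ k, st (k + 1) = next D (st k) (χ k) := fun _ => rfl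
  have hadmtl : ∀ n, Adm D (st n) (fun k => χ (n + k)) := by
    intro n; exact adm_shift D hadm n
  have hq0lt := q0_lt_one D
  have hq0ge := q0_ge D
  -- Step 1: germ-maximality forces each tail of χ to have the Blackwell-optimal value
  have key : ∀ n : ℕ, ∃ a : ℝ, q0 D ≤ a ∧ a < 1 ∧ ∀ q : ℝ, a < q → q < 1 →
      val (fun k => χ (n + k)) q = val (pword D π (st n)) q := by
    intro n
    set u : ℕ → Bool := fun k => if k < n then χ k else pword D π (st n) (k - n) with hudef
    have hagree : ∀ j, j < n → u j = χ j := fun j hj => by simp [hudef, hj]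
    have hutail : (fun j => u (n + j)) = pword D π (st n) := by
      funext j
      simp only [hudef]
      rw [if_neg (by omega)]
      congr 1
      omega
    have huadm : Adm D (s0 D) u := by
      apply adm_splice D hadm
      show Adm D (st n) (pword D π (st n))
      exact adm_pword D hπok (st n)
    set Sn : Set ℕ := {j | u j = true} with hSndef
    have hSnavoid : DAvoiding D Sn := avoiding_of_adm D hD huadm
    have e12 : ∀ q : ℝ, 0 < q → q < 1 →
        genFun Sstar q = (∑ k ∈ Finset.range n, if χ k then q ^ k else 0)
            + q ^ n * val (fun k => χ (n + k)) q
        ∧ genFun Sn q = (∑ k ∈ Finset.range n, if χ k then q ^ k else 0)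
            + q ^ n * val (pword D π (st n)) q := by
      intro q hq0 hq1
      constructor
      · rw [genFun_eq_val Sstar χ hχ, val_split hq0.le hq1 n]
      · rw [genFun_eq_val Sn u (fun j => Iff.rfl), val_split hq0.le hq1 n, hutail]
        congr 1
        apply Finset.sum_congr rfl
        intro k hk
        rw [hagree k (Finset.mem_range.mp hk)]
    have hstarle : ∀ q : ℝ, q0 D < q → q < 1 → genFun Sstar q ≤ genFun Sn q := by
      intro q hqq0 hq1
      have hq0pos : (0:ℝ) < q := by linarith
      obtain ⟨e1, e2⟩ := e12 q hq0pos hq1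
      rw [e1, e2]
      have hle := bw_opt D ⟨hqq0, hq1⟩ (st n) (hadmtl n)
      have hpow : (0:ℝ) ≤ q ^ n := by positivity
      rw [← hπdef] at hle
      nlinarith [hle, hpow]
    have hGe : GermLE Sstar Sn := by
      refine ⟨1 - q0 D, by linarith, ?_⟩
      intro q hq
      exact hstarle q (by have := hq.1; linarith) hq.2
    have hLe : GermLE Sn Sstar := by
      by_contra hnot
      exact hmax ⟨Sn, hSnavoid, hGe, hnot⟩
    obtain ⟨ε, hε, hεle⟩ := hLe
    refine ⟨max (q0 D) (1 - ε), le_max_left _ _, max_lt hq0lt (by linarith), ?_⟩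
    intro q hq hq1
    have hqq0 : q0 D < q := lt_of_le_of_lt (le_max_left _ _) hq
    have hqε : 1 - ε < q := lt_of_le_of_lt (le_max_right _ _) hq
    have hq0pos : (0:ℝ) < q := by linarith
    have heq : genFun Sstar q = genFun Sn q :=
      le_antisymm (hstarle q hqq0 hq1) (hεle q ⟨hqε, hq1⟩)
    obtain ⟨e1, e2⟩ := e12 q hq0pos hq1
    rw [e1, e2] at heq
    have hqn : q ^ n ≠ 0 := by positivity
    have := add_left_cancel heq
    exact mul_left_cancel₀ hqn this
  -- Step 2: value recursion along χ
  have key2 : ∀ n : ℕ, ∃ a : ℝ, q0 D ≤ a ∧ a < 1 ∧ ∀ q : ℝ, a < q → q < 1 →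
      val (pword D π (st n)) q
        = (if χ n then (1:ℝ) else 0) + q * val (pword D π (st (n + 1))) q := by
    intro n
    obtain ⟨a, ha0, ha1, hae⟩ := key n
    obtain ⟨b, hb0, hb1, hbe⟩ := key (n + 1)
    refine ⟨max a b, le_trans ha0 (le_max_left _ _), max_lt ha1 hb1, ?_⟩
    intro q hq hq1
    have hqa : a < q := lt_of_le_of_lt (le_max_left a b) hq
    have hqb : b < q := lt_of_le_of_lt (le_max_right a b) hq
    have hq0pos : (0:ℝ) < q := by linarith
    rw [← hae q hqa hq1, ← hbe q hqb hq1]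
    rw [val_step (w := fun k => χ (n + k)) hq0pos.le hq1]
    have h1 : (fun j => χ (n + (1 + j))) = (fun j => χ (n + 1 + j)) := by
      funext j
      exact congrArg χ (by omega)
    congr 1
    rw [h1]
  -- Step 3: the bit of χ is determined by the state
  have key3 : ∀ n n', st n = st n' → χ n = χ n' := by
    have core : ∀ n n', st n = st n' → χ n = false → χ n' = true → False := by
      intro n n' hst hn hn'
      obtain ⟨a, ha0, ha1, hae⟩ := key2 n
      obtain ⟨b, hb0, hb1, hbe⟩ := key2 n'
      have hc1 := cc_pos D π (next D (st n) false)
      have hc2 := cc_pos D π (next D (st n) true)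
      set R : Polynomial ℝ :=
        Polynomial.X * PP D π (next D (st n) false)
            * (1 - Polynomial.X ^ cc D π (next D (st n) true))
        - (1 - Polynomial.X ^ cc D π (next D (st n) false))
            * (1 - Polynomial.X ^ cc D π (next D (st n) true))
        - Polynomial.X * PP D π (next D (st n) true)
            * (1 - Polynomial.X ^ cc D π (next D (st n) false)) with hR
      have hroots : ∀ q : ℝ, max a b < q → q < 1 → R.IsRoot q := by
        intro q hq hq1
        have hqa : a < q := lt_of_le_of_lt (le_max_left a b) hq
        have hqb : b < q := lt_of_le_of_lt (le_max_right a b) hq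
        have hq0pos : (0:ℝ) < q := by linarith
        have e1 := hae q hqa hq1
        have e2 := hbe q hqb hq1
        rw [hn] at e1
        rw [hn'] at e2
        rw [hstsucc n, hn] at e1
        rw [hstsucc n', hn', ← hst] at e2
        simp at e1 e2
        have ecomb : q * val (pword D π (next D (st n) false)) q
            = 1 + q * val (pword D π (next D (st n) true)) q := by
          rw [← e1, e2]
        have s1 := PP_spec D π (next D (st n) false) q hq0pos.le hq1
        have s2 := PP_spec D π (next D (st n) true) q hq0pos.le hq1
        show R.eval q = 0
        simp only [hR, Polynomial.eval_sub, Polynomial.eval_mul, Polynomial.eval_one,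
          Polynomial.eval_pow, Polynomial.eval_X]
        rw [← s1, ← s2]
        linear_combination (1 - q ^ cc D π (next D (st n) false))
          * (1 - q ^ cc D π (next D (st n) true)) * ecomb
      have hRzero : R = 0 := by
        apply Polynomial.eq_zero_of_infinite_isRoot
        apply Set.Infinite.mono (s := Set.Ioo (max a b) 1)
        · intro q hq
          exact hroots q hq.1 hq.2
        · exact Set.infinite_coe_iff.mp (Set.Ioo.infinite (max_lt ha1 hb1))
      have heval : R.eval 0 = -1 := by
        simp only [hR, Polynomial.eval_sub, Polynomial.eval_mul, Polynomial.eval_one,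
          Polynomial.eval_pow, Polynomial.eval_X]
        rw [zero_pow (by omega : cc D π (next D (st n) false) ≠ 0),
          zero_pow (by omega : cc D π (next D (st n) true) ≠ 0)]
        ring
      rw [hRzero] at heval
      simp at heval
    intro n n' h
    cases hn : χ n <;> cases hn' : χ n'
    · rfl
    · exact (core n n' h hn hn').elim
    · exact (core n' n h.symm hn' hn).elim
    · rfl
  -- Step 4: pigeonhole gives eventual periodicity
  have main : ∀ m m' : ℕ, m < m' → st m = st m' → EventuallyPeriodic Sstar := by
    intro m m' hmm hstmm
    have claim : ∀ j, st (m + j) = st (m' + j) := by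
      intro j
      induction j with
      | zero => simpa using hstmm
      | succ j ih =>
        have hchi : χ (m + j) = χ (m' + j) := key3 _ _ ih
        have h1 : m + (j + 1) = (m + j) + 1 := by omega
        have h2 : m' + (j + 1) = (m' + j) + 1 := by omega
        rw [h1, h2, hstsucc, hstsucc, ih, hchi]
    refine ⟨m, m' - m, by omega, ?_⟩
    intro k hk
    obtain ⟨j, rfl⟩ := Nat.exists_eq_add_of_le hk
    have h1 : χ (m + j) = χ (m' + j) := key3 _ _ (claim j)
    have h2 : m + j + (m' - m) = m' + j := by omega
    rw [← hχ, ← hχ, h2, h1]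
  obtain ⟨n, n', hne, hsteq⟩ := Finite.exists_ne_map_eq_of_infinite st
  rcases hne.lt_or_gt with hlt | hlt
  · exact main n n' hlt hsteq
  · exact main n' n hlt hsteq.symm
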